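/- Let c ∈ (0,1), δ > 0, L > 0, and let W ⊆ ℝⁿ be nonempty, convex, compact and contained in the closed ball of radius L around the origin. Let v̄ be an element of minimal Euclidean norm in −W := {−w : w ∈ W} and assume ‖v̄‖ > δ. Let ξ ∈ ℝⁿ with ‖ξ‖ ≤ L and ⟨v̄, ξ⟩ > −c ‖v̄‖². Then every element v' of minimal norm in −conv(W ∪ {ξ}) satisfies ‖v'‖² < (1 − ((1−c)δ/(2L))²) ‖v̄‖². -/

import Mathlib

/-- adding a violating vector `ξ` to `W` strictly decreases the
minimal norm of the negative convex hull by a uniform factor. -/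
theorem min_norm_decrease_enriched_hull {n : ℕ} (c δ L : ℝ)
    (hc : c ∈ Set.Ioo (0 : ℝ) 1) (hδ : 0 < δ) (hL : 0 < L)
    (W : Set (EuclideanSpace ℝ (Fin n))) (hWne : W.Nonempty) (hWconv : Convex ℝ W)
    (hWcomp : IsCompact W) (hWL : W ⊆ Metric.closedBall 0 L)
    (vbar : EuclideanSpace ℝ (Fin n)) (hvmem : vbar ∈ -W)
    (hvmin : ∀ w ∈ -W, ‖vbar‖ ≤ ‖w‖) (hvδ : δ < ‖vbar‖)
    (ξ : EuclideanSpace ℝ (Fin n)) (hξL : ‖ξ‖ ≤ L)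
    (hip : (inner ℝ vbar ξ : ℝ) > -c * ‖vbar‖ ^ 2) :
    ∀ v' ∈ -(convexHull ℝ (W ∪ {ξ})),
      (∀ w ∈ -(convexHull ℝ (W ∪ {ξ})), ‖v'‖ ≤ ‖w‖) →
      ‖v'‖ ^ 2 < (1 - ((1 - c) * δ / (2 * L)) ^ 2) * ‖vbar‖ ^ 2 := by
  intro v' hv'mem hv'min
  have hvpos : 0 < ‖vbar‖ := hδ.trans hvδ
  have hvW : -vbar ∈ W := by rwa [Set.mem_neg] at hvmem
  have hvL : ‖vbar‖ ≤ L := by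
    have := hWL hvW
    simpa [Metric.mem_closedBall, dist_zero_right] using this
  set A : ℝ := ‖vbar‖ ^ 2 + inner ℝ vbar ξ with hAdef
  have hu : (1 - c) * δ * ‖vbar‖ < A := by
    nlinarith [mul_pos (sub_pos.2 hc.2) (mul_pos hvpos (sub_pos.2 hvδ))]
  have hupos : 0 < (1 - c) * δ * ‖vbar‖ :=
    mul_pos (mul_pos (sub_pos.2 hc.2) hδ) hvpos
  have hApos : 0 < A := hupos.trans hu
  have hA2L : A ≤ 2 * L ^ 2 := by
    have h1 : (inner ℝ vbar ξ : ℝ) ≤ ‖vbar‖ * ‖ξ‖ := real_inner_le_norm _ _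
    nlinarith [norm_nonneg ξ]
  set t : ℝ := A / (4 * L ^ 2) with htdef
  have hL2 : (0:ℝ) < 4 * L ^ 2 := by positivity
  have ht0 : 0 ≤ t := le_of_lt (div_pos hApos hL2)
  have ht1 : t ≤ 1 := by
    rw [htdef, div_le_one hL2]; nlinarith
  -- the candidate point
  have hHconv : Convex ℝ (-(convexHull ℝ (W ∪ {ξ}))) :=
    (convex_convexHull ℝ _).neg
  have hvH : vbar ∈ -(convexHull ℝ (W ∪ {ξ})) := by
    rw [Set.mem_neg]
    exact subset_convexHull ℝ _ (Or.inl hvW)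
  have hξH : -ξ ∈ -(convexHull ℝ (W ∪ {ξ})) :=
    Set.neg_mem_neg.2 (subset_convexHull ℝ _ (Or.inr rfl))
  have hpH : (1 - t) • vbar + t • (-ξ) ∈ -(convexHull ℝ (W ∪ {ξ})) :=
    hHconv hvH hξH (by linarith) ht0 (by ring)
  have hnle : ‖v'‖ ≤ ‖(1 - t) • vbar + t • (-ξ)‖ := hv'min _ hpH
  have hp : (1 - t) • vbar + t • (-ξ) = vbar - t • (vbar + ξ) := by module
  set B : ℝ := ‖vbar + ξ‖ ^ 2 with hBdef
  have hB0 : 0 ≤ B := by positivity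
  have hBle : B ≤ 4 * L ^ 2 := by
    have := norm_add_le vbar ξ
    nlinarith [norm_nonneg (vbar + ξ)]
  have hinner : (inner ℝ vbar (t • (vbar + ξ)) : ℝ) = t * A := by
    rw [real_inner_smul_right, inner_add_right, real_inner_self_eq_norm_sq]
  have hnp : ‖vbar - t • (vbar + ξ)‖ ^ 2 = ‖vbar‖ ^ 2 - 2 * (t * A) + t ^ 2 * B := by
    rw [← hinner, hBdef]
    have := @norm_sub_sq_real (EuclideanSpace ℝ (Fin n)) _ _ vbar (t • (vbar + ξ))
    rw [this, norm_smul]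
    rw [Real.norm_eq_abs, abs_of_nonneg ht0]
    ring
  have hkey : ‖v'‖ ^ 2 ≤ ‖vbar‖ ^ 2 - A ^ 2 / (4 * L ^ 2) := by
    have h1 : ‖v'‖ ^ 2 ≤ ‖vbar‖ ^ 2 - 2 * (t * A) + t ^ 2 * B := by
      rw [← hnp, ← hp]
      exact pow_le_pow_left₀ (norm_nonneg _) hnle 2
    have h2 : ‖vbar‖ ^ 2 - 2 * (t * A) + t ^ 2 * B ≤
        ‖vbar‖ ^ 2 - 2 * (t * A) + t ^ 2 * (4 * L ^ 2) := by
      nlinarith [sq_nonneg t]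
    have h3 : ‖vbar‖ ^ 2 - 2 * (t * A) + t ^ 2 * (4 * L ^ 2) =
        ‖vbar‖ ^ 2 - A ^ 2 / (4 * L ^ 2) := by
      rw [htdef]; field_simp; ring
    exact h1.trans (h2.trans_eq h3)
  have hfinal : ((1 - c) * δ * ‖vbar‖) ^ 2 / (4 * L ^ 2) < A ^ 2 / (4 * L ^ 2) := by
    have hsq : ((1 - c) * δ * ‖vbar‖) ^ 2 < A ^ 2 :=
      pow_lt_pow_left₀ hu hupos.le two_ne_zero
    exact (div_lt_div_iff_of_pos_right hL2).2 hsq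
  have hrhs : (1 - ((1 - c) * δ / (2 * L)) ^ 2) * ‖vbar‖ ^ 2 =
      ‖vbar‖ ^ 2 - ((1 - c) * δ * ‖vbar‖) ^ 2 / (4 * L ^ 2) := by
    field_simp; ring
  rw [hrhs]
  linarith
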